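/- If a binary BCH code of length n = 2^m - 1 has designed correction capability t with t ≤ 2^{⌈m/2⌉-1}, then the minimal polynomials μ₁(x), μ₃(x), ..., μ_{2t-1}(x) are pairwise distinct and each has degree exactly m, so the generator polynomial g(x) = μ₁(x)μ₃(x)···μ_{2t-1}(x) has degree n - k = mt. -/

import Mathlib

open Polynomial

private lemma bch_num1 {m c a e : ℕ} (hc : c = (m + 1) / 2) (hm : 0 < m)
    (ha : a < 2 ^ c) (he0 : 0 < e) (hec : e ≤ m - c) :
    a * (2 ^ e - 1) < 2 ^ m - 1 := by
  have hAB : 2 ^ c * 2 ^ (m - c) = 2 ^ m := by rw [← pow_add]; congr 1; omega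
  have hA2 : (2:ℕ) ^ 1 ≤ 2 ^ c := Nat.pow_le_pow_right (by norm_num) (by omega)
  have hB2 : (2:ℕ) ^ 1 ≤ 2 ^ (m - c) := Nat.pow_le_pow_right (by norm_num) (by omega)
  have hEB : (2:ℕ) ^ e ≤ 2 ^ (m - c) := Nat.pow_le_pow_right (by norm_num) hec
  obtain ⟨A, hA⟩ : ∃ A, 2 ^ c = A + 2 := ⟨2 ^ c - 2, by omega⟩
  obtain ⟨B, hB⟩ : ∃ B, 2 ^ (m - c) = B + 2 := ⟨2 ^ (m - c) - 2, by omega⟩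
  have h1 : a * (2 ^ e - 1) ≤ (A + 1) * (B + 1) :=
    Nat.mul_le_mul (by omega) (by omega)
  have h2 : (A + 1) * (B + 1) + 1 < (A + 2) * (B + 2) := by nlinarith
  have h3 : (A + 2) * (B + 2) = 2 ^ m := by rw [← hA, ← hB]; exact hAB
  generalize hP : a * (2 ^ e - 1) = P at h1 ⊢
  generalize hQ : (A + 1) * (B + 1) = Q at h1 h2
  generalize hR : (A + 2) * (B + 2) = R at h2 h3
  omega

private lemma bch_num2aux {m c x y k : ℕ} (hc : c = (m + 1) / 2) (hy : Odd y)
    (hx : x < 2 ^ c) (hyc : y < 2 ^ c) (hk0 : 0 < k) (hkc : k ≤ m - c)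
    (hmod : y ≡ x * 2 ^ k [MOD 2 ^ m - 1]) : False := by
  have hAB : 2 ^ c * 2 ^ (m - c) = 2 ^ m := by rw [← pow_add]; congr 1; omega
  have hA2 : (2:ℕ) ^ 1 ≤ 2 ^ c := Nat.pow_le_pow_right (by norm_num) (by omega)
  have hB2 : (2:ℕ) ^ 1 ≤ 2 ^ (m - c) := Nat.pow_le_pow_right (by norm_num) (by omega)
  have hM2 : (2:ℕ) ^ 1 ≤ 2 ^ m := Nat.pow_le_pow_right (by norm_num) (by omega)
  have hKB : (2:ℕ) ^ k ≤ 2 ^ (m - c) := Nat.pow_le_pow_right (by norm_num) hkc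
  have hxk : x * 2 ^ k ≤ (2 ^ c - 1) * 2 ^ (m - c) := Nat.mul_le_mul (by omega) hKB
  have hsub : (2 ^ c - 1) * 2 ^ (m - c) = 2 ^ c * 2 ^ (m - c) - 2 ^ (m - c) := by
    rw [Nat.sub_mul, one_mul]
  rw [hsub, hAB] at hxk
  have h2 : 2 ∣ x * 2 ^ k := Dvd.dvd.mul_left (dvd_pow_self 2 hk0.ne') x
  have h2c : 2 ^ c * 2 ≤ 2 ^ m := by
    calc 2 ^ c * 2 ≤ 2 ^ c * 2 ^ (m - c) := Nat.mul_le_mul_left _ (by omega)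
      _ = 2 ^ m := hAB
  generalize hP : x * 2 ^ k = P at hxk hmod h2
  have hP' : P < 2 ^ m - 1 := by omega
  have hyn : y < 2 ^ m - 1 := by omega
  rw [Nat.ModEq, Nat.mod_eq_of_lt hyn, Nat.mod_eq_of_lt hP'] at hmod
  obtain ⟨j, hj⟩ := hy
  omega

private lemma bch_num2 {m c a b k : ℕ} (hc : c = (m + 1) / 2) (hm : 0 < m)
    (ha : Odd a) (hb : Odd b) (hac : a < 2 ^ c) (hbc : b < 2 ^ c) (hkm : k < m)
    (hmod : b ≡ a * 2 ^ k [MOD 2 ^ m - 1]) : a = b := by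
  rcases Nat.eq_zero_or_pos k with rfl | hk0
  · rw [pow_zero, mul_one] at hmod
    rcases eq_or_lt_of_le (show 1 ≤ m by omega) with hm1 | hm2
    · obtain ⟨i, hi⟩ := ha; obtain ⟨j, hj⟩ := hb
      have h2c : (2:ℕ) ^ c = 2 := by
        have : c = 1 := by omega
        rw [this, pow_one]
      omega
    · have hcm : c + 1 ≤ m := by omega
      have h2c : (2:ℕ) ^ (c + 1) ≤ 2 ^ m := Nat.pow_le_pow_right (by norm_num) hcm
      have hpc : (2:ℕ) ^ (c + 1) = 2 ^ c * 2 := by rw [pow_succ]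
      rw [hpc] at h2c
      have han : a < 2 ^ m - 1 := by omega
      have hbn : b < 2 ^ m - 1 := by omega
      rw [Nat.ModEq, Nat.mod_eq_of_lt hbn, Nat.mod_eq_of_lt han] at hmod
      omega
  · by_cases hkc : k ≤ m - c
    · exact absurd hmod (fun h => bch_num2aux hc hb hac hbc hk0 hkc h)
    · have hmk0 : 0 < m - k := by omega
      have hmkc : m - k ≤ m - c := by omega
      have h1 : b * 2 ^ (m - k) ≡ a * 2 ^ k * 2 ^ (m - k) [MOD 2 ^ m - 1] :=
        hmod.mul_right _
      have h2 : a * 2 ^ k * 2 ^ (m - k) = a * 2 ^ m := by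
        rw [mul_assoc, ← pow_add]; congr 2; omega
      have h3 : (2:ℕ) ^ m ≡ 1 [MOD 2 ^ m - 1] :=
        ((Nat.modEq_iff_dvd' Nat.one_le_two_pow).2 dvd_rfl).symm
      have h4 : a * 2 ^ m ≡ a [MOD 2 ^ m - 1] := by
        simpa using h3.mul_left a
      rw [h2] at h1
      have h5 : a ≡ b * 2 ^ (m - k) [MOD 2 ^ m - 1] := (h1.trans h4).symm
      exact absurd h5 (fun h => bch_num2aux hc ha hbc hac hmk0 hmkc h)



/-- If a binary BCH code of length `n = 2^m - 1` has designed correction capability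
`t ≤ 2^{⌈m/2⌉-1}`, then the minimal polynomials `μ₁, μ₃, …, μ_{2t-1}` are pairwise
distinct and each has degree exactly `m`, so `g = μ₁ μ₃ ⋯ μ_{2t-1}` has degree `mt`. -/
theorem stmt10 (m t : ℕ) (hm : 0 < m) (ht : 0 < t)
    (hcond : t ≤ 2 ^ ((m + 1) / 2 - 1))
    (F : Type*) [Field F] [Fintype F] [Algebra (ZMod 2) F]
    (hcard : Fintype.card F = 2 ^ m)
    (α : F) (hα : orderOf α = 2 ^ m - 1)
    (μ : ℕ → Polynomial (ZMod 2)) (hμ : ∀ i, μ i = minpoly (ZMod 2) (α ^ i)) :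
    (∀ i < t, ∀ j < t, i ≠ j → μ (2 * i + 1) ≠ μ (2 * j + 1)) ∧
    (∀ i < t, (μ (2 * i + 1)).natDegree = m) ∧
    (∏ i ∈ Finset.range t, μ (2 * i + 1)).natDegree = m * t := by
  haveI : Fact (Nat.Prime 2) := ⟨Nat.prime_two⟩
  set c := (m + 1) / 2 with hc
  have hc1 : 1 ≤ c := by omega
  have hn2 : (2:ℕ) ^ 1 ≤ 2 ^ m := Nat.pow_le_pow_right (by norm_num) hm
  have hn0 : 0 < 2 ^ m - 1 := by omega
  -- α is a unit
  have hone : α ^ (2 ^ m - 1) = 1 := hα ▸ pow_orderOf_eq_one α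
  obtain ⟨u, hu⟩ : IsUnit α := IsUnit.of_pow_eq_one hone (by omega)
  have huo : orderOf u = 2 ^ m - 1 := by rw [← orderOf_units, hu, hα]
  have huone : u ^ (2 ^ m - 1) = 1 := huo ▸ pow_orderOf_eq_one u
  have hNn : ∀ a : ℕ, orderOf (u ^ a) ∣ 2 ^ m - 1 := by
    intro a
    apply orderOf_dvd_of_pow_eq_one
    calc (u ^ a) ^ (2 ^ m - 1) = (u ^ (2 ^ m - 1)) ^ a := by
          rw [← pow_mul, ← pow_mul, mul_comm]
      _ = 1 := by rw [huone, one_pow]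
  -- Key lemma A: order of u^a doesn't divide 2^e - 1 for small e
  have keyA : ∀ a : ℕ, Odd a → a < 2 ^ c → ∀ e : ℕ, 0 < e → e ≤ m - c →
      ¬ (orderOf (u ^ a) ∣ 2 ^ e - 1) := by
    intro a ha hac e he0 hec hdvd
    have ha0 : 0 < a := ha.pos
    have hNform : orderOf (u ^ a) = (2 ^ m - 1) / Nat.gcd (2 ^ m - 1) a := by
      rw [orderOf_pow, huo]
    have hg1 : Nat.gcd (2 ^ m - 1) a ∣ 2 ^ m - 1 := Nat.gcd_dvd_left _ _
    have hdvd2 : 2 ^ m - 1 ∣ a * (2 ^ e - 1) := by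
      obtain ⟨w, hw⟩ := hdvd
      rw [hNform] at hw
      have h1 : 2 ^ m - 1 ∣ Nat.gcd (2 ^ m - 1) a * (2 ^ e - 1) :=
        ⟨w, by rw [hw, ← mul_assoc, Nat.mul_div_cancel' hg1]⟩
      exact h1.trans (Nat.mul_dvd_mul_right (Nat.gcd_dvd_right _ _) _)
    have he1 : (2:ℕ) ^ 1 ≤ 2 ^ e := Nat.pow_le_pow_right (by norm_num) he0
    have hle := Nat.le_of_dvd (Nat.mul_pos ha0 (by omega)) hdvd2
    exact absurd hle (not_le.2 (bch_num1 hc hm hac he0 hec))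
  -- Key lemma B: generalize to all 0 < d < m via gcd
  have keyB : ∀ a : ℕ, Odd a → a < 2 ^ c → ∀ d : ℕ, 0 < d → d < m →
      ¬ (orderOf (u ^ a) ∣ 2 ^ d - 1) := by
    intro a ha hac d hd0 hdm hdvd
    set N := orderOf (u ^ a) with hN
    have cast_iff : ∀ k : ℕ, (N ∣ 2 ^ k - 1 ↔ (2 : ZMod N) ^ k = 1) := by
      intro k
      rw [← ZMod.natCast_eq_zero_iff]
      have h1 : ((2 ^ k - 1 : ℕ) : ZMod N) = (2 : ZMod N) ^ k - 1 := by
        rw [Nat.cast_sub Nat.one_le_two_pow]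
        push_cast
        ring
      rw [h1, sub_eq_zero, eq_comm]
    have h2d := (cast_iff d).1 hdvd
    have h2m := (cast_iff m).1 (hNn a)
    have hgcd := pow_gcd_eq_one.2 ⟨h2d, h2m⟩
    have he0 : 0 < Nat.gcd d m := Nat.gcd_pos_of_pos_left m hd0
    have heled : Nat.gcd d m ≤ d := Nat.le_of_dvd hd0 (Nat.gcd_dvd_left d m)
    obtain ⟨w, hw⟩ := Nat.gcd_dvd_right d m
    have hw2 : 2 ≤ w := by
      by_contra hlt
      have : Nat.gcd d m * w ≤ Nat.gcd d m * 1 := Nat.mul_le_mul_left _ (by omega)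
      omega
    have h2e : Nat.gcd d m * 2 ≤ m := by
      have := Nat.mul_le_mul_left (Nat.gcd d m) hw2
      omega
    have hec : Nat.gcd d m ≤ m - c := by omega
    exact keyA a ha hac (Nat.gcd d m) he0 hec ((cast_iff (Nat.gcd d m)).2 hgcd)
  -- integrality and finrank
  have hβint : ∀ x : F, IsIntegral (ZMod 2) x := fun x => IsIntegral.of_finite _ _
  have hfr : Module.finrank (ZMod 2) F = m := by
    have h1 := Module.card_eq_pow_finrank (K := ZMod 2) (V := F)
    rw [ZMod.card, hcard] at h1
    exact (Nat.pow_right_injective (le_refl 2) h1.symm)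
  -- each minimal polynomial has degree m
  have hdeg : ∀ a : ℕ, Odd a → a < 2 ^ c → (minpoly (ZMod 2) (α ^ a)).natDegree = m := by
    intro a ha hac
    have hint := hβint (α ^ a)
    set d := (minpoly (ZMod 2) (α ^ a)).natDegree with hd
    have hd0 : 0 < d := minpoly.natDegree_pos hint
    have hddvd : d ∣ m := hfr ▸ minpoly.degree_dvd hint
    have hdm : d ≤ m := Nat.le_of_dvd hm hddvd
    rcases eq_or_lt_of_le hdm with h | hlt
    · exact h
    exfalso
    -- show (α^a)^(2^d) = α^a
    haveI : Finite F := Finite.of_fintype F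
    set K' := IntermediateField.adjoin (ZMod 2) ({α ^ a} : Set F) with hK'
    haveI : Fintype K' := Fintype.ofFinite K'
    have hcardK : Fintype.card K' = 2 ^ d := by
      have h1 := Module.card_eq_pow_finrank (K := ZMod 2) (V := K')
      rw [ZMod.card] at h1
      rw [h1, IntermediateField.adjoin.finrank hint]
    have hmem : α ^ a ∈ K' := IntermediateField.mem_adjoin_simple_self (ZMod 2) (α ^ a)
    have hpow : (α ^ a) ^ (2 ^ d) = α ^ a := by
      have h2 := FiniteField.pow_card (⟨α ^ a, hmem⟩ : K')
      rw [hcardK] at h2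
      exact congrArg Subtype.val h2
    have hupow : (u ^ a) ^ (2 ^ d) = u ^ a := by
      apply Units.ext
      rw [Units.val_pow_eq_pow_val, Units.val_pow_eq_pow_val, hu]
      exact hpow
    have hcancel : (u ^ a) ^ (2 ^ d - 1) = 1 := by
      have h3 : (u ^ a) ^ (2 ^ d - 1) * (u ^ a) = 1 * (u ^ a) := by
        rw [one_mul, ← pow_succ, Nat.sub_add_cancel Nat.one_le_two_pow]
        exact hupow
      exact mul_right_cancel h3
    exact keyB a ha hac d hd0 hlt (orderOf_dvd_of_pow_eq_one hcancel)
  -- conjugacy: equal minimal polynomials force equal exponents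
  have hconj : ∀ a b : ℕ, Odd a → a < 2 ^ c → Odd b → b < 2 ^ c →
      minpoly (ZMod 2) (α ^ a) = minpoly (ZMod 2) (α ^ b) → a = b := by
    intro a b ha hac hb hbc hmin
    classical
    haveI : CharP F 2 := charP_of_injective_algebraMap (algebraMap (ZMod 2) F).injective 2
    let φ : F →ₐ[ZMod 2] F := AlgHom.mk' (frobenius F 2) (fun r x => by
      have hr : r * r = r := by fin_cases r <;> rfl
      simp only [Algebra.smul_def, map_mul, frobenius_def]
      rw [← map_pow, pow_two, hr])
    have hfrob : ∀ x : F, φ x = x ^ 2 := fun x => rfl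
    set p := minpoly (ZMod 2) (α ^ a) with hp
    have hint := hβint (α ^ a)
    have hmonic : p.Monic := minpoly.monic hint
    have hdega : p.natDegree = m := hdeg a ha hac
    have hroots : ∀ k : ℕ, (Polynomial.aeval (α ^ (a * 2 ^ k))) p = 0 := by
      intro k
      induction k with
      | zero =>
        simp only [pow_zero, mul_one]
        exact minpoly.aeval (ZMod 2) (α ^ a)
      | succ k ih =>
        have h1 : α ^ (a * 2 ^ (k + 1)) = φ (α ^ (a * 2 ^ k)) := by
          rw [hfrob, ← pow_mul]
          congr 1
          ring
        rw [h1, Polynomial.aeval_algHom_apply, ih, map_zero]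
    have hinj : ∀ k, k < m → ∀ l, l < m → α ^ (a * 2 ^ k) = α ^ (a * 2 ^ l) → k = l := by
      have key : ∀ k l, k < m → l < m → k < l → α ^ (a * 2 ^ k) = α ^ (a * 2 ^ l) → False := by
        intro k l hk hl hkl heq
        have hueq : (u ^ a) ^ (2 ^ k) = (u ^ a) ^ (2 ^ l) := by
          apply Units.ext
          rw [Units.val_pow_eq_pow_val, Units.val_pow_eq_pow_val,
            Units.val_pow_eq_pow_val, Units.val_pow_eq_pow_val, hu, ← pow_mul, ← pow_mul]
          exact heq
        rw [pow_eq_pow_iff_modEq] at hueq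
        set N := orderOf (u ^ a) with hN
        have hdvdN : N ∣ 2 ^ l - 2 ^ k :=
          (Nat.modEq_iff_dvd' (Nat.pow_le_pow_right (by norm_num) hkl.le)).1 hueq
        have hpowadd : (2:ℕ) ^ k * 2 ^ (l - k) = 2 ^ l := by
          rw [← pow_add]; congr 1; omega
        have hfact : (2:ℕ) ^ l - 2 ^ k = 2 ^ k * (2 ^ (l - k) - 1) := by
          rw [Nat.mul_sub, mul_one, hpowadd]
        rw [hfact] at hdvdN
        have hNodd : ¬ (2 ∣ N) := by
          intro h2N
          have h1 : (2:ℕ) ∣ 2 ^ m - 1 := h2N.trans (hNn a)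
          have h2 : (2:ℕ) ∣ 2 ^ m := dvd_pow_self 2 hm.ne'
          omega
        have hcop : Nat.Coprime N (2 ^ k) :=
          (Nat.Coprime.pow_left k ((Nat.prime_two.coprime_iff_not_dvd).2 hNodd)).symm
        have hNdvd2 : N ∣ 2 ^ (l - k) - 1 := by
          rw [mul_comm] at hdvdN
          exact hcop.dvd_of_dvd_mul_right hdvdN
        exact keyB a ha hac (l - k) (by omega) (by omega) hNdvd2
      intro k hk l hl heq
      by_contra hne
      rcases Nat.lt_or_ge k l with h | h
      · exact key k l hk hl h heq
      · exact key l k hl hk (by omega) heq.symm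
    -- the m conjugates exhaust the roots of p over F
    have hmap0 : p.map (algebraMap (ZMod 2) F) ≠ 0 := (hmonic.map _).ne_zero
    set s : Multiset F := (Finset.range m).val.map (fun k => α ^ (a * 2 ^ k)) with hs
    have hnodup : s.Nodup := by
      refine Multiset.Nodup.map_on ?_ (Finset.range m).nodup
      intro x hx y hy hxy
      exact hinj x (by simpa using hx) y (by simpa using hy) hxy
    have hle : s ≤ (p.map (algebraMap (ZMod 2) F)).roots := by
      refine Multiset.le_iff_count.2 fun x => ?_
      by_cases hxs : x ∈ s
      · rw [Multiset.count_eq_one_of_mem hnodup hxs, Polynomial.count_roots]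
        refine (Polynomial.rootMultiplicity_pos hmap0).2 ?_
        obtain ⟨k, hk, rfl⟩ := Multiset.mem_map.1 hxs
        have h1 := hroots k
        rwa [Polynomial.aeval_def, ← Polynomial.eval_map, ← Polynomial.IsRoot.def] at h1
      · rw [Multiset.count_eq_zero_of_notMem hxs]
        exact Nat.zero_le _
    have hdvd : (s.map (fun r => X - C r)).prod ∣ p.map (algebraMap (ZMod 2) F) :=
      (Multiset.prod_X_sub_C_dvd_iff_le_roots hmap0 s).2 hle
    have hqmonic : ((s.map fun r => X - C r)).prod.Monic :=
      monic_multiset_prod_of_monic _ _ (fun r _ => monic_X_sub_C r)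
    have hqdeg : ((s.map fun r => X - C r)).prod.natDegree = m := by
      rw [natDegree_multiset_prod_X_sub_C_eq_card]
      simp [hs]
    have hpdeg : (p.map (algebraMap (ZMod 2) F)).natDegree = m := by
      rw [natDegree_map, hdega]
    have heqpq : p.map (algebraMap (ZMod 2) F) = (s.map fun r => X - C r).prod := by
      obtain ⟨r, hr⟩ := hdvd
      have hr0 : r ≠ 0 := by
        rintro rfl
        rw [mul_zero] at hr
        exact hmap0 hr
      have hrdeg : r.natDegree = 0 := by
        have h1 := congrArg natDegree hr
        rw [natDegree_mul hqmonic.ne_zero hr0, hqdeg, hpdeg] at h1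
        omega
      have hlcr : r.leadingCoeff = 1 := by
        have h1 := congrArg leadingCoeff hr
        rwa [(hmonic.map (algebraMap (ZMod 2) F)).leadingCoeff, leadingCoeff_mul,
          hqmonic.leadingCoeff, one_mul, eq_comm] at h1
      have hr1 : r = 1 := by
        rw [eq_C_of_natDegree_eq_zero hrdeg]
        rw [Polynomial.leadingCoeff, hrdeg] at hlcr
        rw [hlcr, map_one]
      rw [hr, hr1, mul_one]
    -- α ^ b is a root, hence is a conjugate of α ^ a
    have hbroot : (p.map (algebraMap (ZMod 2) F)).eval (α ^ b) = 0 := by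
      have h1 : (Polynomial.aeval (α ^ b)) p = 0 := by
        rw [hmin]
        exact minpoly.aeval _ _
      rwa [Polynomial.aeval_def, ← Polynomial.eval_map] at h1
    rw [heqpq, Polynomial.eval_multiset_prod] at hbroot
    obtain ⟨g, hg, hg0⟩ := Multiset.mem_map.1 (Multiset.prod_eq_zero_iff.1 hbroot)
    obtain ⟨rt, hrt, hrteq⟩ := Multiset.mem_map.1 hg
    obtain ⟨k, hk, rfl⟩ := Multiset.mem_map.1 hrt
    have hroot_eq : α ^ b = α ^ (a * 2 ^ k) := by
      have h1 : (X - C (α ^ (a * 2 ^ k))).eval (α ^ b) = 0 := by rw [hrteq]; exact hg0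
      rw [Polynomial.eval_sub, Polynomial.eval_X, Polynomial.eval_C, sub_eq_zero] at h1
      exact h1
    have humod : u ^ b = u ^ (a * 2 ^ k) := by
      apply Units.ext
      rw [Units.val_pow_eq_pow_val, Units.val_pow_eq_pow_val, hu]
      exact hroot_eq
    rw [pow_eq_pow_iff_modEq, huo] at humod
    exact bch_num2 hc hm ha hb hac hbc (by simpa using hk) humod
  -- assemble
  have hbound : ∀ i, i < t → 2 * i + 1 < 2 ^ c := by
    intro i hi
    have h1 : (2:ℕ) ^ (c - 1) * 2 = 2 ^ c := by
      rw [← pow_succ]; congr 1; omega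
    have h2 : t ≤ 2 ^ (c - 1) := hcond
    omega
  have hodd : ∀ i : ℕ, Odd (2 * i + 1) := fun i => ⟨i, rfl⟩
  refine ⟨?_, ?_, ?_⟩
  · intro i hi j hj hij hequ
    rw [hμ, hμ] at hequ
    have := hconj (2 * i + 1) (2 * j + 1) (hodd i) (hbound i hi) (hodd j) (hbound j hj) hequ
    omega
  · intro i hi
    rw [hμ]
    exact hdeg _ (hodd i) (hbound i hi)
  · have h1 : (∏ i ∈ Finset.range t, μ (2 * i + 1)).natDegree
        = ∑ i ∈ Finset.range t, (μ (2 * i + 1)).natDegree := by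
      apply Polynomial.natDegree_prod
      intro i hi
      rw [hμ]
      exact minpoly.ne_zero (hβint _)
    have h2 : ∀ i ∈ Finset.range t, (μ (2 * i + 1)).natDegree = m := fun i hi => by
      rw [hμ]
      exact hdeg _ (hodd i) (hbound i (Finset.mem_range.1 hi))
    rw [h1, Finset.sum_congr rfl h2, Finset.sum_const, Finset.card_range, smul_eq_mul, mul_comm]
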